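/- Let G be a digraph and A, B ⊆ V(G). The maximum size of a collection of pairwise vertex-disjoint paths each starting in A and ending in B equals the minimum size of a vertex set X ⊆ V(G) such that G − X contains no path from A to B. -/

import Mathlib

section Helpers
variable {V : Type*}

lemma getLast?_append_right (s l : List V) (h : l ≠ []) :
    (s ++ l).getLast? = l.getLast? := by
  rw [List.getLast?_append, List.getLast?_eq_getLast h]
  simp

lemma head?_append_left (s l : List V) (h : s ≠ []) :
    (s ++ l).head? = s.head? := by
  rw [List.head?_append]
  cases h' : s.head? with
  | none => exact absurd h' (by simp [h])
  | some x => simp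

lemma getLast?_cons_ne_nil (a : V) (l : List V) (h : l ≠ []) :
    (a :: l).getLast? = l.getLast? := getLast?_append_right [a] l h

/-- Extract a path from a walk, with the same endpoints and vertices a subset. -/
lemma walk_to_path (G : V → V → Prop) :
    ∀ (w : List V), w.Chain' G → w ≠ [] →
    ∃ p : List V, p ≠ [] ∧ p.Nodup ∧ p.Chain' G ∧ p.head? = w.head? ∧
      p.getLast? = w.getLast? ∧ ∀ v ∈ p, v ∈ w := by
  intro w
  induction w with
  | nil => intro _ h; exact absurd rfl h
  | cons a rest ih =>
    intro hch _
    rcases eq_or_ne rest [] with hr | hr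
    · subst hr
      exact ⟨[a], by simp, by simp, List.isChain_singleton a, rfl, rfl, by simp⟩
    · rw [List.Chain', List.isChain_cons] at hch
      obtain ⟨p, hp0, hpn, hpc, hph, hpl, hpm⟩ := ih hch.2 hr
      by_cases hap : a ∈ p
      · obtain ⟨s, t, hst⟩ := List.append_of_mem hap
        refine ⟨a :: t, by simp, ?_, ?_, by simp, ?_, ?_⟩
        · exact ((List.sublist_append_right s (a :: t)).nodup (hst ▸ hpn))
        · exact (hst ▸ hpc).right_of_append
        · rw [getLast?_cons_ne_nil a rest hr, ← hpl, hst,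
            getLast?_append_right s (a :: t) (by simp)]
        · intro v hv
          rcases List.mem_cons.1 hv with rfl | hv
          · exact List.mem_cons_self
          · exact List.mem_cons_of_mem a (hpm v (hst ▸ (by simp [hv] : v ∈ s ++ a :: t)))
      · refine ⟨a :: p, by simp, List.nodup_cons.2 ⟨hap, hpn⟩, ?_, by simp, ?_, ?_⟩
        · rw [List.Chain', List.isChain_cons]
          refine ⟨?_, hpc⟩
          intro y hy
          rw [hph] at hy
          exact hch.1 y hy
        · rw [getLast?_cons_ne_nil a p hp0, getLast?_cons_ne_nil a rest hr, hpl]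
        · intro v hv
          rcases List.mem_cons.1 hv with rfl | hv
          · exact List.mem_cons_self
          · exact List.mem_cons_of_mem a (hpm v hv)

/-- Strengthen a chain when the weaker relation holds on members. -/
lemma chain'_imp_mem (G G' : V → V → Prop) :
    ∀ (q : List V), q.Chain' G → (∀ x y, G x y → x ∈ q → y ∈ q → G' x y) →
      q.Chain' G' := by
  intro q
  induction q with
  | nil => intro _ _; exact List.isChain_nil
  | cons a l ih =>
    intro hch h
    rw [List.Chain', List.isChain_cons] at hch ⊢
    refine ⟨?_, ih hch.2 fun x y hxy hx hy =>
      h x y hxy (List.mem_cons_of_mem a hx) (List.mem_cons_of_mem a hy)⟩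
    intro y hy
    have hyl : y ∈ l := by
      cases l with
      | nil => simp at hy
      | cons b t =>
        simp only [List.head?_cons, Option.mem_def, Option.some.injEq] at hy
        exact hy ▸ List.mem_cons_self
    exact h a y (hch.1 y hy) List.mem_cons_self (List.mem_cons_of_mem a hyl)

/-- If a `G`-chain is not a `G'`-chain and the only `G`-edge not in `G'` is `(u,v)`,
the list uses the consecutive pair `u, v`. -/
lemma chain_split {G G' : V → V → Prop} {u v : V}
    (h : ∀ x y, G x y → ¬ G' x y → x = u ∧ y = v) :
    ∀ (p : List V), p.Chain' G → ¬ p.Chain' G' → ∃ s t, p = s ++ u :: v :: t := by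
  intro p
  induction p with
  | nil => intro _ hn; exact absurd List.isChain_nil hn
  | cons a l ih =>
    intro hch hn
    cases l with
    | nil => exact absurd (List.isChain_singleton a) hn
    | cons b t =>
      rw [List.Chain', List.isChain_cons_cons] at hch
      by_cases hab : G' a b
      · have hnt : ¬ (b :: t).Chain' G' := fun hc => hn (List.isChain_cons_cons.2 ⟨hab, hc⟩)
        obtain ⟨s, t', hst⟩ := ih hch.2 hnt
        exact ⟨a :: s, t', by rw [List.cons_append, ← hst]⟩
      · obtain ⟨rfl, rfl⟩ := h a b hch.1 hab
        exact ⟨[], t, rfl⟩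

end Helpers

/-- A (directed) path given as a nonempty list of pairwise-distinct vertices
with consecutive pairs being edges of the digraph `G`. -/
def IsPathList {V : Type*} (G : V → V → Prop) (p : List V) : Prop :=
  p ≠ [] ∧ p.Nodup ∧ p.Chain' G

/-- The first vertex of the list `p` belongs to `A`. -/
def FirstIn {V : Type*} (p : List V) (A : Set V) : Prop := ∃ a ∈ A, p.head? = some a

/-- The last vertex of the list `p` belongs to `A`. -/
def LastIn {V : Type*} (p : List V) (A : Set V) : Prop := ∃ a ∈ A, p.getLast? = some a

/-- `X` is an `(A,B)`-separator in `G`: every path of `G` starting in `A` and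
ending in `B` meets `X`. -/
def IsSeparator {V : Type*} (G : V → V → Prop) (A B X : Set V) : Prop :=
  ∀ p : List V, IsPathList G p → FirstIn p A → LastIn p B → ∃ v ∈ p, v ∈ X

/-- Two lists of vertices share no vertex. -/
def ListsDisjoint {V : Type*} (p q : List V) : Prop := ∀ v, v ∈ p → v ∉ q

section Menger
variable {V : Type*} [Fintype V] [DecidableEq V]

/-- Minimal size of an `(A,B)`-separator. -/
noncomputable def minSep (G : V → V → Prop) (A B : Set V) : ℕ :=
  sInf {n : ℕ | ∃ X : Finset V, IsSeparator G A B ↑X ∧ X.card = n}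

lemma sep_univ (G : V → V → Prop) (A B : Set V) :
    IsSeparator G A B ↑(Finset.univ : Finset V) := by
  intro p hp _ _
  obtain ⟨h0, -, -⟩ := hp
  exact ⟨p.head h0, List.head_mem h0, by simp⟩

lemma sepSet_nonempty (G : V → V → Prop) (A B : Set V) :
    {n : ℕ | ∃ X : Finset V, IsSeparator G A B ↑X ∧ X.card = n}.Nonempty :=
  ⟨_, Finset.univ, sep_univ G A B, rfl⟩

lemma minSep_spec (G : V → V → Prop) (A B : Set V) :
    ∃ X : Finset V, IsSeparator G A B ↑X ∧ X.card = minSep G A B :=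
  Nat.sInf_mem (sepSet_nonempty G A B)

lemma minSep_le {G : V → V → Prop} {A B : Set V} {X : Finset V}
    (hX : IsSeparator G A B ↑X) : minSep G A B ≤ X.card :=
  Nat.sInf_le ⟨X, hX, rfl⟩

/-- Easy direction: a disjoint path family is no larger than any separator. -/
lemma card_le_sep {G : V → V → Prop} {A B : Set V} {P : Finset (List V)}
    (hP : ∀ p ∈ P, IsPathList G p ∧ FirstIn p A ∧ LastIn p B)
    (hd : ∀ p ∈ P, ∀ q ∈ P, p ≠ q → ListsDisjoint p q)
    {X : Finset V} (hX : IsSeparator G A B ↑X) : P.card ≤ X.card := by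
  rcases P.eq_empty_or_nonempty with rfl | ⟨p0, hp0⟩
  · simp
  · have h0 := (hP p0 hp0).1.1
    haveI : Inhabited V := ⟨p0.head h0⟩
    have key : ∀ p ∈ P, ∃ v, v ∈ p ∧ v ∈ X := by
      intro p hp
      obtain ⟨h1, h2, h3⟩ := hP p hp
      obtain ⟨v, hv1, hv2⟩ := hX p h1 h2 h3
      exact ⟨v, hv1, hv2⟩
    classical
    set f : List V → V := fun p => if h : ∃ v, v ∈ p ∧ v ∈ X then h.choose else default
    refine Finset.card_le_card_of_injOn f ?_ ?_
    · intro p hp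
      have h : ∃ v, v ∈ p ∧ v ∈ X := key p hp
      simp only [f, dif_pos h]
      exact h.choose_spec.2
    · intro p hp q hq hfq
      by_contra hne
      have h1 : ∃ v, v ∈ p ∧ v ∈ X := key p hp
      have h2 : ∃ v, v ∈ q ∧ v ∈ X := key q hq
      simp only [f, dif_pos h1, dif_pos h2] at hfq
      exact hd p hp q hq hne _ h1.choose_spec.1 (hfq ▸ h2.choose_spec.1)

/-- Base case of the induction: a graph with no edges. -/
lemma menger_base (G : V → V → Prop) (hG : ∀ x y, ¬ G x y) (A B : Set V) :
    ∃ P : Finset (List V),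
      (∀ p ∈ P, IsPathList G p ∧ FirstIn p A ∧ LastIn p B) ∧
      (∀ p ∈ P, ∀ q ∈ P, p ≠ q → ListsDisjoint p q) ∧
      P.card = minSep G A B := by
  classical
  set T : Finset V := Finset.univ.filter (fun v => v ∈ A ∧ v ∈ B) with hT
  have hsingle : ∀ p : List V, IsPathList G p → FirstIn p A → LastIn p B →
      ∃ a, p = [a] ∧ a ∈ A ∧ a ∈ B := by
    intro p hp hpA hpB
    obtain ⟨h0, hn, hc⟩ := hp
    cases p with
    | nil => exact absurd rfl h0
    | cons a l =>
      cases l with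
      | nil =>
        obtain ⟨x, hx, hhx⟩ := hpA
        obtain ⟨y, hy, hhy⟩ := hpB
        simp only [List.head?_cons, Option.some.injEq] at hhx
        simp only [List.getLast?_singleton, Option.some.injEq] at hhy
        exact ⟨a, rfl, hhx ▸ hx, hhy ▸ hy⟩
      | cons b t => exact absurd (List.isChain_cons_cons.1 hc).1 (hG a b)
  have hsepT : IsSeparator G A B ↑T := by
    intro p hp hpA hpB
    obtain ⟨a, rfl, ha, hb⟩ := hsingle p hp hpA hpB
    exact ⟨a, by simp, by simp [hT, ha, hb]⟩
  have hmin : minSep G A B = T.card := by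
    refine le_antisymm (minSep_le hsepT) ?_
    obtain ⟨X, hX, hXc⟩ := minSep_spec G A B
    rw [← hXc]
    refine Finset.card_le_card ?_
    intro a haT
    simp only [hT, Finset.mem_filter] at haT
    obtain ⟨v, hv, hvX⟩ := hX [a] ⟨by simp, by simp, List.isChain_singleton a⟩
      ⟨a, haT.2.1, rfl⟩ ⟨a, haT.2.2, rfl⟩
    simp only [List.mem_singleton] at hv
    exact hv ▸ hvX
  refine ⟨T.image (fun v => [v]), ?_, ?_, ?_⟩
  · intro p hp
    simp only [Finset.mem_image] at hp
    obtain ⟨v, hvT, rfl⟩ := hp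
    simp only [hT, Finset.mem_filter] at hvT
    exact ⟨⟨by simp, by simp, List.isChain_singleton v⟩, ⟨v, hvT.2.1, rfl⟩, ⟨v, hvT.2.2, rfl⟩⟩
  · intro p hp q hq hne
    simp only [Finset.mem_image] at hp hq
    obtain ⟨v, -, rfl⟩ := hp
    obtain ⟨w, -, rfl⟩ := hq
    intro x hx hx'
    simp only [List.mem_singleton] at hx hx'
    subst hx; subst hx'; exact hne rfl
  · rw [Finset.card_image_of_injective _ (fun a b h => by simpa using h), hmin]

end Menger
section Part2
variable {V : Type*} [Fintype V] [DecidableEq V]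

lemma mem_of_getLast?_eq {l : List V} {a : V} (h : l.getLast? = some a) : a ∈ l := by
  obtain ⟨h', h2⟩ := List.mem_getLast?_eq_getLast (Option.mem_def.2 h)
  exact h2 ▸ List.getLast_mem h'

lemma mem_of_head?_eq {l : List V} {a : V} (h : l.head? = some a) : a ∈ l := by
  rw [List.eq_cons_of_mem_head? (Option.mem_def.2 h)]
  exact List.mem_cons_self

lemma ne_nil_of_getLast?_eq {l : List V} {a : V} (h : l.getLast? = some a) : l ≠ [] := by
  intro hl; rw [hl] at h; simp at h

lemma sep_of_superset {G : V → V → Prop} {A B X : Set V} (h : B ⊆ X) :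
    IsSeparator G A B X := by
  intro p _ _ hB
  obtain ⟨a, ha, hga⟩ := hB
  exact ⟨a, mem_of_getLast?_eq hga, h ha⟩

variable {G : V → V → Prop} {u v : V} {A B : Set V} {S : Finset V}

/-- In the situation of the inductive step: `G'` is `G` minus the edge `(u,v)`,
and `S` separates `A` from `B` in `G'`.  Every `A`–`B` path of `G` contains an
`A → insert u S` path of `G'`. -/
lemma exists_prefix_path
    (hS : IsSeparator (fun x y => G x y ∧ ¬(x = u ∧ y = v)) A B ↑S)
    {p : List V} (hp : IsPathList G p) (hA : FirstIn p A) (hB : LastIn p B) :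
    ∃ q : List V, IsPathList (fun x y => G x y ∧ ¬(x = u ∧ y = v)) q ∧
      FirstIn q A ∧ LastIn q ↑(insert u S) ∧ ∀ x ∈ q, x ∈ p := by
  set G' : V → V → Prop := fun x y => G x y ∧ ¬(x = u ∧ y = v) with hG'
  obtain ⟨hp0, hpn, hpc⟩ := hp
  by_cases hch : p.Chain' G'
  · obtain ⟨w, hwp, hwS⟩ := hS p ⟨hp0, hpn, hch⟩ hA hB
    obtain ⟨s, t, rfl⟩ := List.append_of_mem hwp
    refine ⟨s ++ [w], ⟨by simp, ?_, ?_⟩, ?_, ?_, ?_⟩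
    · exact (List.IsPrefix.sublist ⟨t, by simp⟩).nodup hpn
    · exact hch.prefix ⟨t, by simp⟩
    · obtain ⟨a, ha, hha⟩ := hA
      refine ⟨a, ha, ?_⟩
      rw [← hha, List.head?_append, List.head?_append]
      simp
    · exact ⟨w, by simp only [Finset.coe_insert, Set.mem_insert_iff]; exact Or.inr hwS,
        List.getLast?_concat⟩
    · intro x hx; simp only [List.mem_append] at hx ⊢
      rcases hx with h | h
      · exact Or.inl h
      · simp at h; simp [h]
  · have hsplit : ∀ x y, G x y → ¬ G' x y → x = u ∧ y = v := by
      intro x y hxy hn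
      by_contra hc
      exact hn ⟨hxy, hc⟩
    obtain ⟨s, t, rfl⟩ := chain_split hsplit p hpc hch
    have hvnot : v ∉ s ++ [u] := by
      rw [List.nodup_append] at hpn
      intro hv
      rcases List.mem_append.1 hv with h | h
      · exact hpn.2.2 v h v (by simp) rfl
      · simp at h
        have := hpn.2.1
        simp [h] at this
    refine ⟨s ++ [u], ⟨by simp, ?_, ?_⟩, ?_, ?_, ?_⟩
    · exact (List.IsPrefix.sublist ⟨v :: t, by simp⟩).nodup hpn
    · refine chain'_imp_mem G G' _ (hpc.prefix ⟨v :: t, by simp⟩) ?_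
      intro x y hxy hx hy
      by_contra hc
      obtain ⟨rfl, rfl⟩ := hsplit x y hxy hc
      exact hvnot hy
    · obtain ⟨a, ha, hha⟩ := hA
      refine ⟨a, ha, ?_⟩
      rw [← hha, List.head?_append, List.head?_append]
      simp
    · exact ⟨u, by simp, List.getLast?_concat⟩
    · intro x hx; simp only [List.mem_append] at hx ⊢
      rcases hx with h | h
      · exact Or.inl h
      · simp at h; simp [h]

/-- Dual: every `A`–`B` path of `G` contains an `insert v S → B` path of `G'`. -/
lemma exists_suffix_path
    (hS : IsSeparator (fun x y => G x y ∧ ¬(x = u ∧ y = v)) A B ↑S)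
    {p : List V} (hp : IsPathList G p) (hA : FirstIn p A) (hB : LastIn p B) :
    ∃ q : List V, IsPathList (fun x y => G x y ∧ ¬(x = u ∧ y = v)) q ∧
      FirstIn q ↑(insert v S) ∧ LastIn q B ∧ ∀ x ∈ q, x ∈ p := by
  set G' : V → V → Prop := fun x y => G x y ∧ ¬(x = u ∧ y = v) with hG'
  obtain ⟨hp0, hpn, hpc⟩ := hp
  by_cases hch : p.Chain' G'
  · obtain ⟨w, hwp, hwS⟩ := hS p ⟨hp0, hpn, hch⟩ hA hB
    obtain ⟨s, t, rfl⟩ := List.append_of_mem hwp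
    refine ⟨w :: t, ⟨by simp, ?_, hch.right_of_append⟩, ?_, ?_, ?_⟩
    · exact ((List.sublist_append_right s _).nodup hpn)
    · exact ⟨w, by simp only [Finset.coe_insert, Set.mem_insert_iff]; exact Or.inr hwS, rfl⟩
    · obtain ⟨b, hb, hhb⟩ := hB
      exact ⟨b, hb, by rw [← hhb, getLast?_append_right s _ (by simp)]⟩
    · intro x hx; simp only [List.mem_append]; exact Or.inr hx
  · have hsplit : ∀ x y, G x y → ¬ G' x y → x = u ∧ y = v := by
      intro x y hxy hn
      by_contra hc
      exact hn ⟨hxy, hc⟩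
    obtain ⟨s, t, rfl⟩ := chain_split hsplit p hpc hch
    have hunot : u ∉ v :: t := by
      rw [show s ++ u :: v :: t = (s ++ [u]) ++ v :: t by simp] at hpn
      rw [List.nodup_append] at hpn
      exact fun hu => hpn.2.2 u (by simp) u hu rfl
    refine ⟨v :: t, ⟨by simp, ?_, ?_⟩, ?_, ?_, ?_⟩
    · exact ((List.sublist_append_right (s ++ [u]) _).nodup
        (by rw [show (s ++ [u]) ++ v :: t = s ++ u :: v :: t by simp]; exact hpn))
    · have hc : (v :: t).Chain' G := by
        have := hpc
        rw [show s ++ u :: v :: t = (s ++ [u]) ++ v :: t by simp] at this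
        exact this.right_of_append
      refine chain'_imp_mem G G' _ hc ?_
      intro x y hxy hx hy
      by_contra hc'
      obtain ⟨rfl, rfl⟩ := hsplit x y hxy hc'
      exact hunot hx
    · exact ⟨v, by simp, rfl⟩
    · obtain ⟨b, hb, hhb⟩ := hB
      refine ⟨b, hb, ?_⟩
      rw [← hhb, show s ++ u :: v :: t = (s ++ [u]) ++ v :: t by simp,
        getLast?_append_right _ _ (by simp)]
    · intro x hx
      rw [show s ++ u :: v :: t = (s ++ [u]) ++ v :: t by simp, List.mem_append]
      exact Or.inr hx

lemma sep_insert_u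
    (hS : IsSeparator (fun x y => G x y ∧ ¬(x = u ∧ y = v)) A B ↑S) :
    IsSeparator G A B ↑(insert u S) := by
  intro p hp hA hB
  obtain ⟨q, hq, hqA, hqS, hqm⟩ := exists_prefix_path hS hp hA hB
  obtain ⟨a, ha, hga⟩ := hqS
  exact ⟨a, hqm a (mem_of_getLast?_eq hga), ha⟩

lemma sep_insert_v
    (hS : IsSeparator (fun x y => G x y ∧ ¬(x = u ∧ y = v)) A B ↑S) :
    IsSeparator G A B ↑(insert v S) := by
  intro p hp hA hB
  obtain ⟨q, hq, hqS, hqB, hqm⟩ := exists_suffix_path hS hp hA hB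
  obtain ⟨a, ha, hga⟩ := hqS
  exact ⟨a, hqm a (mem_of_head?_eq hga), ha⟩

lemma sep_transfer_u
    (hS : IsSeparator (fun x y => G x y ∧ ¬(x = u ∧ y = v)) A B ↑S)
    {X : Finset V}
    (hX : IsSeparator (fun x y => G x y ∧ ¬(x = u ∧ y = v)) A ↑(insert u S) ↑X) :
    IsSeparator G A B ↑X := by
  intro p hp hA hB
  obtain ⟨q, hq, hqA, hqS, hqm⟩ := exists_prefix_path hS hp hA hB
  obtain ⟨x, hxq, hxX⟩ := hX q hq hqA hqS
  exact ⟨x, hqm x hxq, hxX⟩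

lemma sep_transfer_v
    (hS : IsSeparator (fun x y => G x y ∧ ¬(x = u ∧ y = v)) A B ↑S)
    {X : Finset V}
    (hX : IsSeparator (fun x y => G x y ∧ ¬(x = u ∧ y = v)) ↑(insert v S) B ↑X) :
    IsSeparator G A B ↑X := by
  intro p hp hA hB
  obtain ⟨q, hq, hqS, hqB, hqm⟩ := exists_suffix_path hS hp hA hB
  obtain ⟨x, hxq, hxX⟩ := hX q hq hqS hqB
  exact ⟨x, hqm x hxq, hxX⟩

/-- A nodup chain avoids loops, so deleting a loop edge keeps it a chain. -/
lemma chain'_nodup_imp (G G' : V → V → Prop) (h : ∀ x y, x ≠ y → G x y → G' x y) :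
    ∀ p : List V, p.Nodup → p.Chain' G → p.Chain' G' := by
  intro p
  induction p with
  | nil => intro _ _; exact List.isChain_nil
  | cons a l ih =>
    intro hn hc
    rw [List.Chain', List.isChain_cons] at hc ⊢
    rw [List.nodup_cons] at hn
    refine ⟨?_, ih hn.2 hc.2⟩
    intro y hy
    refine h a y ?_ (hc.1 y hy)
    intro rfl'
    exact hn.1 (rfl' ▸ mem_of_head?_eq hy)

end Part2
section Part3
variable {V : Type*} [Fintype V] [DecidableEq V]
variable {G : V → V → Prop} {u v : V} {A B : Set V} {S : Finset V}

/-- If an `A → insert u S` path and an `insert v S → B` path of `G'` share a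
vertex `w`, then `w ∈ S`, `w` is the last vertex of the first path and the
first vertex of the second. -/
lemma cross_lemma
    (hS : IsSeparator (fun x y => G x y ∧ ¬(x = u ∧ y = v)) A B ↑S)
    {p q : List V}
    (hp : IsPathList (fun x y => G x y ∧ ¬(x = u ∧ y = v)) p)
    (hpA : FirstIn p A)
    (hq : IsPathList (fun x y => G x y ∧ ¬(x = u ∧ y = v)) q)
    (hqB : LastIn q B)
    (uniq1 : ∀ w ∈ p, w ∈ insert u S → p.getLast? = some w)
    (uniq2 : ∀ w ∈ q, w ∈ insert v S → q.head? = some w)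
    {w : V} (hwp : w ∈ p) (hwq : w ∈ q) :
    w ∈ S ∧ p.getLast? = some w ∧ q.head? = some w := by
  set G' : V → V → Prop := fun x y => G x y ∧ ¬(x = u ∧ y = v) with hG'
  obtain ⟨s1, t1, hp1⟩ := List.append_of_mem hwp
  obtain ⟨s2, t2, hq1⟩ := List.append_of_mem hwq
  have hp1' : p = (s1 ++ [w]) ++ t1 := by simp [hp1]
  have hq2c : (w :: t2).Chain' G' := by
    have := hq.2.2; rw [hq1] at this; exact this.right_of_append
  set W : List V := (s1 ++ [w]) ++ t2 with hW
  have hWc : W.Chain' G' := by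
    refine List.isChain_append.2 ⟨?_, (List.isChain_cons.1 hq2c).2, ?_⟩
    · exact (hp1' ▸ hp.2.2).prefix ⟨t1, rfl⟩
    · intro x hx y hy
      rw [List.getLast?_concat] at hx
      simp only [Option.mem_def, Option.some.injEq] at hx
      exact hx ▸ (List.isChain_cons.1 hq2c).1 y hy
  have hW0 : W ≠ [] := by simp [hW]
  have hWh : W.head? = p.head? := by
    rw [hW, head?_append_left (s1 ++ [w]) t2 (by simp), hp1', head?_append_left (s1 ++ [w]) t1 (by simp)]
  have hWl : W.getLast? = q.getLast? := by
    rw [hW, show (s1 ++ [w]) ++ t2 = s1 ++ (w :: t2) by simp,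
      getLast?_append_right _ _ (by simp), hq1,
      getLast?_append_right _ _ (by simp)]
  obtain ⟨r, hr0, hrn, hrc, hrh, hrl, hrm⟩ := walk_to_path G' W hWc hW0
  obtain ⟨z, hzr, hzS⟩ := hS r ⟨hr0, hrn, hrc⟩
    (by obtain ⟨a, ha, hha⟩ := hpA; exact ⟨a, ha, by rw [hrh, hWh, hha]⟩)
    (by obtain ⟨b, hb, hhb⟩ := hqB; exact ⟨b, hb, by rw [hrl, hWl, hhb]⟩)
  have hzS' : z ∈ S := Finset.mem_coe.1 hzS
  have hzW : z ∈ W := hrm z hzr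
  rw [hW] at hzW
  rcases List.mem_append.1 hzW with hz1 | hz2
  · -- z in the p-part
    have hzp : z ∈ p := by rw [hp1']; exact List.mem_append.2 (Or.inl hz1)
    have hlast : p.getLast? = some z := uniq1 z hzp (Finset.mem_insert_of_mem hzS')
    rcases List.mem_append.1 hz1 with hzs1 | hzw
    · -- z ∈ s1 : contradiction with nodup
      exfalso
      have : z ∈ w :: t1 := by
        have h2 : p.getLast? = (w :: t1).getLast? := by
          rw [hp1, getLast?_append_right _ _ (by simp)]
        rw [h2] at hlast
        exact mem_of_getLast?_eq hlast
      have hnd := hp.2.1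
      rw [hp1, List.nodup_append] at hnd
      exact hnd.2.2 z hzs1 z this rfl
    · -- z = w
      simp only [List.mem_singleton] at hzw
      subst hzw
      exact ⟨hzS', hlast, uniq2 z hwq (Finset.mem_insert_of_mem hzS')⟩
  · -- z ∈ t2 : contradiction
    exfalso
    have hzq : z ∈ q := by rw [hq1]; exact List.mem_append.2 (Or.inr (by simp [hz2]))
    have hhead : q.head? = some z := uniq2 z hzq (Finset.mem_insert_of_mem hzS')
    have hnd := hq.2.1
    rw [hq1, List.nodup_append] at hnd
    rcases eq_or_ne s2 [] with rfl | hs2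
    · rw [hq1] at hhead
      simp only [List.nil_append, List.head?_cons, Option.some.injEq] at hhead
      subst hhead
      exact (List.nodup_cons.1 hnd.2.1).1 hz2
    · rw [hq1, head?_append_left _ _ hs2] at hhead
      exact hnd.2.2 z (mem_of_head?_eq hhead) z (by simp [hz2]) rfl

end Part3
section Part4
variable {V : Type*} [Fintype V] [DecidableEq V]
variable {G : V → V → Prop} {u v : V} {A B : Set V} {S : Finset V}

lemma glue_paths
    (hS : IsSeparator (fun x y => G x y ∧ ¬(x = u ∧ y = v)) A B ↑S)
    (huv : G u v) (huS : u ∉ S) (hvS : v ∉ S) (hune : u ≠ v)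
    {P1 P2 : Finset (List V)} {k : ℕ}
    (hP1 : ∀ p ∈ P1, IsPathList (fun x y => G x y ∧ ¬(x = u ∧ y = v)) p ∧
        FirstIn p A ∧ LastIn p ↑(insert u S))
    (hd1 : ∀ p ∈ P1, ∀ q ∈ P1, p ≠ q → ListsDisjoint p q)
    (hP1c : P1.card = k)
    (hP2 : ∀ p ∈ P2, IsPathList (fun x y => G x y ∧ ¬(x = u ∧ y = v)) p ∧
        FirstIn p ↑(insert v S) ∧ LastIn p B)
    (hd2 : ∀ p ∈ P2, ∀ q ∈ P2, p ≠ q → ListsDisjoint p q)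
    (hP2c : P2.card = k)
    (hkS : (insert u S).card = k) (hkS' : (insert v S).card = k) :
    ∃ P : Finset (List V),
      (∀ p ∈ P, IsPathList G p ∧ FirstIn p A ∧ LastIn p B) ∧
      (∀ p ∈ P, ∀ q ∈ P, p ≠ q → ListsDisjoint p q) ∧
      P.card = k := by
  classical
  set G' : V → V → Prop := fun x y => G x y ∧ ¬(x = u ∧ y = v) with hG'
  have hG'G : ∀ x y, G' x y → G x y := fun x y h => h.1
  -- selection function for P1
  have hsel1 : ∀ s ∈ insert u S, ∃ p ∈ P1, p.getLast? = some s := by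
    intro s hs
    have himg : P1.image (fun p => p.getLast?) = (insert u S).image some := by
      refine Finset.eq_of_subset_of_card_le ?_ ?_
      · intro o ho
        obtain ⟨p, hp, rfl⟩ := Finset.mem_image.1 ho
        obtain ⟨a, ha, hga⟩ := (hP1 p hp).2.2
        exact Finset.mem_image.2 ⟨a, Finset.mem_coe.1 ha, hga.symm⟩
      · rw [Finset.card_image_of_injective _ (Option.some_injective V), hkS,
          Finset.card_image_of_injOn, hP1c]
        intro p hp q hq hpq
        have hpq' : p.getLast? = q.getLast? := hpq
        by_contra hne
        obtain ⟨a, _, hga⟩ := (hP1 p (Finset.mem_coe.1 hp)).2.2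
        exact hd1 p (Finset.mem_coe.1 hp) q (Finset.mem_coe.1 hq) hne a
          (mem_of_getLast?_eq hga) (mem_of_getLast?_eq (by rw [← hpq']; exact hga))
    have : some s ∈ P1.image (fun p => p.getLast?) := by
      rw [himg]; exact Finset.mem_image.2 ⟨s, hs, rfl⟩
    obtain ⟨p, hp, hga⟩ := Finset.mem_image.1 this
    exact ⟨p, hp, hga⟩
  have hsel2 : ∀ s ∈ insert v S, ∃ p ∈ P2, p.head? = some s := by
    intro s hs
    have himg : P2.image (fun p => p.head?) = (insert v S).image some := by
      refine Finset.eq_of_subset_of_card_le ?_ ?_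
      · intro o ho
        obtain ⟨p, hp, rfl⟩ := Finset.mem_image.1 ho
        obtain ⟨a, ha, hga⟩ := (hP2 p hp).2.1
        exact Finset.mem_image.2 ⟨a, Finset.mem_coe.1 ha, hga.symm⟩
      · rw [Finset.card_image_of_injective _ (Option.some_injective V), hkS',
          Finset.card_image_of_injOn, hP2c]
        intro p hp q hq hpq
        have hpq' : p.head? = q.head? := hpq
        by_contra hne
        obtain ⟨a, _, hga⟩ := (hP2 p (Finset.mem_coe.1 hp)).2.1
        exact hd2 p (Finset.mem_coe.1 hp) q (Finset.mem_coe.1 hq) hne a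
          (mem_of_head?_eq hga) (mem_of_head?_eq (by rw [← hpq']; exact hga))
    have : some s ∈ P2.image (fun p => p.head?) := by
      rw [himg]; exact Finset.mem_image.2 ⟨s, hs, rfl⟩
    obtain ⟨p, hp, hga⟩ := Finset.mem_image.1 this
    exact ⟨p, hp, hga⟩
  -- uniqueness of separator vertices on paths
  have uniq1 : ∀ p ∈ P1, ∀ w ∈ p, w ∈ insert u S → p.getLast? = some w := by
    intro p hp w hwp hwS
    obtain ⟨q, hq, hgq⟩ := hsel1 w hwS
    rcases eq_or_ne q p with rfl | hne
    · exact hgq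
    · exact absurd hwp (fun h => hd1 q hq p hp hne w (mem_of_getLast?_eq hgq) h)
  have uniq2 : ∀ p ∈ P2, ∀ w ∈ p, w ∈ insert v S → p.head? = some w := by
    intro p hp w hwp hwS
    obtain ⟨q, hq, hgq⟩ := hsel2 w hwS
    rcases eq_or_ne q p with rfl | hne
    · exact hgq
    · exact absurd hwp (fun h => hd2 q hq p hp hne w (mem_of_head?_eq hgq) h)
  -- choice functions
  set φ1 : V → List V := fun s =>
    if h : ∃ p ∈ P1, p.getLast? = some s then h.choose else [] with hφ1def
  set φ2 : V → List V := fun s =>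
    if h : ∃ p ∈ P2, p.head? = some s then h.choose else [] with hφ2def
  have hφ1 : ∀ s ∈ insert u S, φ1 s ∈ P1 ∧ (φ1 s).getLast? = some s := by
    intro s hs
    have h := hsel1 s hs
    simp only [hφ1def, dif_pos h]
    obtain ⟨h1, h2⟩ := h.choose_spec
    exact ⟨h1, h2⟩
  have hφ2 : ∀ s ∈ insert v S, φ2 s ∈ P2 ∧ (φ2 s).head? = some s := by
    intro s hs
    have h := hsel2 s hs
    simp only [hφ2def, dif_pos h]
    obtain ⟨h1, h2⟩ := h.choose_spec
    exact ⟨h1, h2⟩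
  -- cross intersection property
  have cross : ∀ p ∈ P1, ∀ q ∈ P2, ∀ w, w ∈ p → w ∈ q →
      w ∈ S ∧ p.getLast? = some w ∧ q.head? = some w := by
    intro p hp q hq w hwp hwq
    exact cross_lemma hS (hP1 p hp).1 (hP1 p hp).2.1 (hP2 q hq).1 (hP2 q hq).2.2
      (uniq1 p hp) (uniq2 q hq) hwp hwq
  -- the pairing function and glued paths
  set σ : V → V := fun s => if s = u then v else s with hσdef
  set g : V → List V := fun s =>
    if s = u then φ1 u ++ φ2 v else (φ1 s).dropLast ++ φ2 s with hgdef
  have hσmem : ∀ s ∈ insert u S, σ s ∈ insert v S := by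
    intro s hs
    by_cases h : s = u
    · simp [hσdef, h]
    · simp only [hσdef, if_neg h]
      exact Finset.mem_insert_of_mem
        ((Finset.mem_insert.1 hs).resolve_left h)
  have hσne : ∀ s ∈ insert u S, ∀ s' ∈ insert u S, s ≠ s' → s ≠ σ s' := by
    intro s hs s' hs' hne
    by_cases h : s' = u
    · have hσv : σ s' = v := by simp [hσdef, h]
      rw [hσv]
      intro hsv
      rcases Finset.mem_insert.1 hs with h' | h'
      · exact hune (by rw [← h', hsv])
      · exact hvS (hsv ▸ h')
    · have hσv : σ s' = s' := by simp [hσdef, h]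
      rw [hσv]; exact hne
  -- facts about the glued path for each s ∈ insert u S
  have gfact : ∀ s ∈ insert u S,
      (IsPathList G (g s) ∧ FirstIn (g s) A ∧ LastIn (g s) B) ∧
      (∀ x ∈ g s, x ∈ φ1 s ∨ x ∈ φ2 (σ s)) ∧ s ∈ g s := by
    intro s hs
    obtain ⟨hp1m, hp1l⟩ := hφ1 s hs
    obtain ⟨hq2m, hq2h⟩ := hφ2 (σ s) (hσmem s hs)
    obtain ⟨⟨hp0, hpn, hpc⟩, hpA, hpSu⟩ := hP1 (φ1 s) hp1m
    obtain ⟨⟨hq0, hqn, hqc⟩, hqSv, hqB⟩ := hP2 (φ2 (σ s)) hq2m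
    by_cases hsu : s = u
    · -- the special path through the edge (u,v)
      have hσeq : σ s = v := by simp [hσdef, hsu]
      have hgeq : g s = φ1 s ++ φ2 (σ s) := by
        rw [hσeq, hsu]; simp [hgdef]
      have hlast : (φ1 s).getLast? = some u := by rw [hp1l, hsu]
      have hhead : (φ2 (σ s)).head? = some v := by rw [hq2h, hσeq]
      refine ⟨⟨⟨by simp [hgeq, hp0], ?_, ?_⟩, ?_, ?_⟩, ?_, ?_⟩
      · -- nodup
        rw [hgeq]
        refine hpn.append hqn ?_
        intro x hxp hxq
        obtain ⟨-, hlx, hhx⟩ := cross _ hp1m _ hq2m x hxp hxq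
        rw [hlast] at hlx
        rw [hhead] at hhx
        exact hune ((Option.some.inj hlx).trans (Option.some.inj hhx).symm)
      · -- chain
        rw [hgeq]
        refine List.isChain_append.2 ⟨hpc.imp hG'G, hqc.imp hG'G, ?_⟩
        intro x hx y hy
        rw [Option.mem_def, hlast] at hx
        rw [Option.mem_def, hhead] at hy
        rw [← Option.some.inj hx, ← Option.some.inj hy]
        exact huv
      · -- FirstIn
        obtain ⟨a, ha, hha⟩ := hpA
        refine ⟨a, ha, ?_⟩
        rw [hgeq, head?_append_left _ _ hp0, hha]
      · -- LastIn
        obtain ⟨b, hb, hhb⟩ := hqB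
        refine ⟨b, hb, ?_⟩
        rw [hgeq, getLast?_append_right _ _ hq0, hhb]
      · -- membership
        intro x hx
        rw [hgeq] at hx
        exact List.mem_append.1 hx
      · -- s ∈ g s
        rw [hgeq]
        exact List.mem_append.2 (Or.inl (mem_of_getLast?_eq hp1l))
    · -- ordinary glued path
      have hgeq : g s = (φ1 s).dropLast ++ φ2 s := by simp [hgdef, hsu]
      have hσeq : σ s = s := by simp [hσdef, hsu]
      rw [hσeq] at hq2h hq0 hqn hqc hqSv hqB hq2m
      have hgl : (φ1 s).getLast hp0 = s := by
        have := List.getLast?_eq_getLast hp0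
        rw [hp1l] at this
        exact (Option.some.injEq _ _ ▸ this.symm)
      have hpeq : (φ1 s).dropLast ++ [s] = φ1 s := by
        have h' := List.dropLast_append_getLast hp0
        rw [hgl] at h'
        exact h'
      have hpc' : ((φ1 s).dropLast ++ [s]).Chain' G' := by rw [hpeq]; exact hpc
      obtain ⟨c1, -, c3⟩ := List.isChain_append.1 hpc'
      have hsnd : s ∉ (φ1 s).dropLast := by
        have : ((φ1 s).dropLast ++ [s]).Nodup := by rw [hpeq]; exact hpn
        rw [List.nodup_append] at this
        exact fun h => this.2.2 s h s (by simp) rfl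
      refine ⟨⟨⟨by simp [hgeq, hq0], ?_, ?_⟩, ?_, ?_⟩, ?_, ?_⟩
      · -- nodup
        rw [hgeq]
        refine ((List.dropLast_sublist (φ1 s)).nodup hpn).append hqn ?_
        intro x hxd hxq
        have hxp : x ∈ φ1 s := (List.dropLast_sublist (φ1 s)).mem hxd
        obtain ⟨-, hlx, -⟩ := cross _ hp1m _ hq2m x hxp hxq
        rw [hp1l] at hlx
        exact hsnd ((Option.some.inj hlx) ▸ hxd)
      · -- chain
        rw [hgeq]
        refine (List.isChain_append.2 ⟨c1, hqc, ?_⟩).imp hG'G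
        intro x hx y hy
        rw [Option.mem_def, hq2h] at hy
        rw [← Option.some.inj hy]
        exact c3 x hx s (by simp)
      · -- FirstIn
        obtain ⟨a, ha, hha⟩ := hpA
        refine ⟨a, ha, ?_⟩
        rcases eq_or_ne (φ1 s).dropLast [] with hd | hd
        · have hps : φ1 s = [s] := by rw [← hpeq, hd]; simp
          rw [hps] at hha
          simp only [List.head?_cons] at hha
          rw [hgeq, hd, List.nil_append, hq2h, hha]
        · have h2 : (φ1 s).head? = (φ1 s).dropLast.head? := by
            conv_lhs => rw [← hpeq]
            rw [head?_append_left _ _ hd]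
          rw [hgeq, head?_append_left _ _ hd, ← h2, hha]
      · -- LastIn
        obtain ⟨b, hb, hhb⟩ := hqB
        refine ⟨b, hb, ?_⟩
        rw [hgeq, getLast?_append_right _ _ hq0, hhb]
      · -- membership
        intro x hx
        rw [hgeq] at hx
        rw [hσeq]
        rcases List.mem_append.1 hx with h | h
        · exact Or.inl ((List.dropLast_sublist (φ1 s)).mem h)
        · exact Or.inr h
      · -- s ∈ g s
        rw [hgeq]
        exact List.mem_append.2 (Or.inr (mem_of_head?_eq hq2h))
  -- pairwise disjointness of glued paths
  have gdisj : ∀ s ∈ insert u S, ∀ s' ∈ insert u S, s ≠ s' →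
      ListsDisjoint (g s) (g s') := by
    intro s hs s' hs' hne x hx hx'
    obtain ⟨-, hmem, -⟩ := gfact s hs
    obtain ⟨-, hmem', -⟩ := gfact s' hs'
    obtain ⟨hp1m, hp1l⟩ := hφ1 s hs
    obtain ⟨hq2m, hq2h⟩ := hφ2 (σ s) (hσmem s hs)
    obtain ⟨hp1m', hp1l'⟩ := hφ1 s' hs'
    obtain ⟨hq2m', hq2h'⟩ := hφ2 (σ s') (hσmem s' hs')
    rcases hmem x hx with h1 | h1 <;> rcases hmem' x hx' with h2 | h2
    · -- both in P1 paths
      have hnep : φ1 s ≠ φ1 s' := by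
        intro hEq
        rw [hEq, hp1l'] at hp1l
        exact hne (Option.some.inj hp1l).symm
      exact hd1 _ hp1m _ hp1m' hnep x h1 h2
    · -- φ1 s and φ2 (σ s')
      obtain ⟨-, hlx, hhx⟩ := cross _ hp1m _ hq2m' x h1 h2
      rw [hp1l] at hlx
      rw [hq2h'] at hhx
      have hxs : x = s := by simpa using hlx.symm
      have hxσ : x = σ s' := by simpa using hhx.symm
      exact hσne s hs s' hs' hne (hxs ▸ hxσ)
    · -- φ2 (σ s) and φ1 s'
      obtain ⟨-, hlx, hhx⟩ := cross _ hp1m' _ hq2m x h2 h1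
      rw [hp1l'] at hlx
      rw [hq2h] at hhx
      have hxs : x = s' := by simpa using hlx.symm
      have hxσ : x = σ s := by simpa using hhx.symm
      exact hσne s' hs' s hs hne.symm (hxs ▸ hxσ)
    · -- both in P2 paths
      have hσs : σ s ≠ σ s' := by
        intro hEq
        by_cases h : s = u <;> by_cases h' : s' = u
        · exact hne (h.trans h'.symm)
        · simp only [hσdef, if_pos h, if_neg h'] at hEq
          exact hvS (hEq ▸ (Finset.mem_insert.1 hs').resolve_left h')
        · simp only [hσdef, if_neg h, if_pos h'] at hEq
          exact hvS (hEq ▸ (Finset.mem_insert.1 hs).resolve_left h)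
        · simp only [hσdef, if_neg h, if_neg h'] at hEq
          exact hne hEq
      have hnep : φ2 (σ s) ≠ φ2 (σ s') := by
        intro hEq
        rw [hEq, hq2h'] at hq2h
        exact hσs (Option.some.inj hq2h).symm
      exact hd2 _ hq2m _ hq2m' hnep x h1 h2
  -- assemble
  refine ⟨(insert u S).image g, ?_, ?_, ?_⟩
  · intro p hp
    obtain ⟨s, hs, rfl⟩ := Finset.mem_image.1 hp
    exact (gfact s hs).1
  · intro p hp q hq hne
    obtain ⟨s, hs, rfl⟩ := Finset.mem_image.1 hp
    obtain ⟨s', hs', rfl⟩ := Finset.mem_image.1 hq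
    have hss : s ≠ s' := fun h => hne (h ▸ rfl)
    exact gdisj s hs s' hs' hss
  · rw [Finset.card_image_of_injOn, hkS]
    intro s hs s' hs' hEq
    by_contra hne
    exact gdisj s (Finset.mem_coe.1 hs) s' (Finset.mem_coe.1 hs') hne s
      (gfact s (Finset.mem_coe.1 hs)).2.2 (hEq ▸ (gfact s (Finset.mem_coe.1 hs)).2.2)

end Part4
section Part5
variable {V : Type*} [Fintype V] [DecidableEq V]

lemma menger_core :
    ∀ (n : ℕ) (E : Finset (V × V)), E.card ≤ n →
    ∀ (G : V → V → Prop), (∀ x y, G x y → (x, y) ∈ E) →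
    ∀ A B : Set V, ∃ P : Finset (List V),
      (∀ p ∈ P, IsPathList G p ∧ FirstIn p A ∧ LastIn p B) ∧
      (∀ p ∈ P, ∀ q ∈ P, p ≠ q → ListsDisjoint p q) ∧
      P.card = minSep G A B := by
  intro n
  induction n with
  | zero =>
    intro E hE G hG A B
    have hnone : ∀ x y, ¬ G x y := by
      intro x y h
      have := hG x y h
      rw [Finset.card_eq_zero.1 (Nat.le_zero.1 hE)] at this
      simp at this
    exact menger_base G hnone A B
  | succ n ih =>
    intro E hE G hG A B
    by_cases hedge : ∃ x y, G x y
    swap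
    · push_neg at hedge; exact menger_base G hedge A B
    obtain ⟨u, v, huv⟩ := hedge
    set G' : V → V → Prop := fun x y => G x y ∧ ¬(x = u ∧ y = v) with hG'def
    have hG'E : ∀ x y, G' x y → (x, y) ∈ E.erase (u, v) := by
      intro x y h
      refine Finset.mem_erase.2 ⟨?_, hG x y h.1⟩
      intro hEq
      rw [Prod.mk.injEq] at hEq
      exact h.2 hEq
    have hEc : (E.erase (u, v)).card ≤ n := by
      have h1 : (u, v) ∈ E := hG u v huv
      have h3 := Finset.card_erase_of_mem h1
      have h2 : 1 ≤ E.card := Finset.card_pos.2 ⟨_, h1⟩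
      omega
    set k := minSep G A B with hkdef
    rcases le_or_gt k (minSep G' A B) with hk | hk
    · -- removing the edge does not decrease the min separator
      obtain ⟨P, hP, hd, hPc⟩ := ih _ hEc G' hG'E A B
      obtain ⟨Q, hQP, hQc⟩ := Finset.exists_subset_card_eq (s := P) (n := k) (by omega)
      refine ⟨Q, ?_, ?_, hQc⟩
      · intro p hp
        obtain ⟨⟨h0, h1, h2⟩, h3, h4⟩ := hP p (hQP hp)
        exact ⟨⟨h0, h1, h2.imp (fun _ _ h => h.1)⟩, h3, h4⟩
      · intro p hp q hq hne
        exact hd p (hQP hp) q (hQP hq) hne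
    · -- there is a smaller separator S in G'
      obtain ⟨S, hS, hScard⟩ := minSep_spec G' A B
      have hSk : S.card < k := by rw [hScard]; exact hk
      have hune : u ≠ v := by
        intro huveq
        have hsep : IsSeparator G A B ↑S := by
          intro p hp hA hB
          refine hS p ⟨hp.1, hp.2.1, ?_⟩ hA hB
          refine chain'_nodup_imp G G' ?_ p hp.2.1 hp.2.2
          intro x y hxy hGxy
          exact ⟨hGxy, fun h => hxy (by rw [h.1, h.2, huveq])⟩
        have := minSep_le hsep
        omega
      have hSuSep : IsSeparator G A B ↑(insert u S) := sep_insert_u hS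
      have hSvSep : IsSeparator G A B ↑(insert v S) := sep_insert_v hS
      have hSuc : (insert u S).card = k := by
        have h1 : k ≤ (insert u S).card := minSep_le hSuSep
        have h2 := Finset.card_insert_le u S
        omega
      have hSvc : (insert v S).card = k := by
        have h1 : k ≤ (insert v S).card := minSep_le hSvSep
        have h2 := Finset.card_insert_le v S
        omega
      have huS : u ∉ S := by
        intro h
        rw [Finset.insert_eq_self.2 h] at hSuc
        omega
      have hvS : v ∉ S := by
        intro h
        rw [Finset.insert_eq_self.2 h] at hSvc
        omega
      have h1 : minSep G' A ↑(insert u S) = k := by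
        refine le_antisymm ?_ ?_
        · have hsep : IsSeparator G' A ↑(insert u S) ↑(insert u S) :=
            sep_of_superset (fun x hx => hx)
          calc minSep G' A ↑(insert u S) ≤ (insert u S).card := minSep_le hsep
            _ = k := hSuc
        · refine le_csInf (sepSet_nonempty _ _ _) ?_
          rintro m ⟨X, hX, rfl⟩
          exact minSep_le (sep_transfer_u hS hX)
      have h2 : minSep G' ↑(insert v S) B = k := by
        refine le_antisymm ?_ ?_
        · have hsep : IsSeparator G' ↑(insert v S) B ↑(insert v S) := by
            intro p hp hA hB
            obtain ⟨a, ha, hga⟩ := hA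
            exact ⟨a, mem_of_head?_eq hga, ha⟩
          calc minSep G' ↑(insert v S) B ≤ (insert v S).card := minSep_le hsep
            _ = k := hSvc
        · refine le_csInf (sepSet_nonempty _ _ _) ?_
          rintro m ⟨X, hX, rfl⟩
          exact minSep_le (sep_transfer_v hS hX)
      obtain ⟨P1, hP1, hd1, hP1c⟩ := ih _ hEc G' hG'E A ↑(insert u S)
      obtain ⟨P2, hP2, hd2, hP2c⟩ := ih _ hEc G' hG'E ↑(insert v S) B
      rw [h1] at hP1c
      rw [h2] at hP2c
      exact glue_paths hS huv huS hvS hune hP1 hd1 hP1c hP2 hd2 hP2c hSuc hSvc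

end Part5

/-- Menger's theorem for digraphs (vertex version): the maximum size of a
collection of pairwise vertex-disjoint `A → B` paths equals the minimum size
of an `(A,B)`-separator. -/
theorem menger_digraph {V : Type*} [Fintype V] [DecidableEq V]
    (G : V → V → Prop) (A B : Set V) :
    sSup {n : ℕ | ∃ P : Finset (List V),
        (∀ p ∈ P, IsPathList G p ∧ FirstIn p A ∧ LastIn p B) ∧
        (∀ p ∈ P, ∀ q ∈ P, p ≠ q → ListsDisjoint p q) ∧ P.card = n} =
    sInf {n : ℕ | ∃ X : Finset V, IsSeparator G A B ↑X ∧ X.card = n} := by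
  classical
  have hrhs : sInf {n : ℕ | ∃ X : Finset V, IsSeparator G A B ↑X ∧ X.card = n}
      = minSep G A B := rfl
  obtain ⟨P, hP, hd, hPc⟩ :=
    menger_core (V := V) (Finset.univ : Finset (V × V)).card Finset.univ le_rfl G
      (fun x y _ => Finset.mem_univ _) A B
  have hmem : minSep G A B ∈ {n : ℕ | ∃ P : Finset (List V),
      (∀ p ∈ P, IsPathList G p ∧ FirstIn p A ∧ LastIn p B) ∧
      (∀ p ∈ P, ∀ q ∈ P, p ≠ q → ListsDisjoint p q) ∧ P.card = n} :=
    ⟨P, hP, hd, hPc⟩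
  have hbound : ∀ m ∈ {n : ℕ | ∃ P : Finset (List V),
      (∀ p ∈ P, IsPathList G p ∧ FirstIn p A ∧ LastIn p B) ∧
      (∀ p ∈ P, ∀ q ∈ P, p ≠ q → ListsDisjoint p q) ∧ P.card = n},
      m ≤ minSep G A B := by
    rintro m ⟨Q, hQ, hdQ, rfl⟩
    obtain ⟨X, hX, hXc⟩ := minSep_spec G A B
    rw [← hXc]
    exact card_le_sep hQ hdQ hX
  rw [hrhs]
  exact le_antisymm (csSup_le ⟨_, hmem⟩ hbound)
    (le_csSup ⟨minSep G A B, hbound⟩ hmem)
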